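/- m-machine feasibility characterization: let m ≥ 3 and let E = {J_1,…,J_{k'}} be a set of jobs of an m-machine JIT flow-shop instance whose due dates are pairwise distinct and numbered so that d_1 < d_2 < … < d_{k'}, with d_0 = 0. Then E is feasible if and only if both of the following hold: (a) d_{j−1} + p^(m)_j ≤ d_j for every j; and (b) there exist processing orders σ_1, σ_2, …, σ_{m−1} of E with σ_1 = σ_2 such that, scheduling the jobs of E on machines M_1,…,M_{m−1} as soon as possible in these orders (the j-th job of σ_i starts on M_i at the maximum of the completion of the (j−1)-st job of σ_i on M_i and its own completion on M_{i−1}, with machine M_1 starting at time 0), the resulting completion time of each job j on M_{m−1} is at most d_j − p^(m)_j. -/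

import Mathlib

open Finset

/-- A just-in-time flow-shop instance on `m` machines with jobs of type `J`:
`p i j` is the (positive integer) processing time of job `j` on machine `i`,
`d j` its positive integer due date and `w j` its positive integer weight. -/
structure JITInstance (m : ℕ) (J : Type) where
  p : Fin m → J → ℕ
  d : J → ℕ
  w : J → ℕ
  p_pos : ∀ i j, 0 < p i j
  d_pos : ∀ j, 0 < d j
  w_pos : ∀ j, 0 < w j

/-- `S` is a JIT schedule of the job set `E`: on every machine the processing
intervals `(S i j, S i j + p i j]` of distinct jobs of `E` are pairwise disjoint,
each job's operation on machine `i+1` starts no earlier than its completion on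
machine `i`, and every job of `E` completes on the last machine exactly at its
due date.  (Start times are nonnegative automatically, being naturals.) -/
def IsJITSchedule {m : ℕ} {J : Type} (I : JITInstance m J)
    (E : Finset J) (S : Fin m → J → ℕ) : Prop :=
  (∀ i : Fin m, ∀ j ∈ E, ∀ j' ∈ E, j ≠ j' →
      S i j + I.p i j ≤ S i j' ∨ S i j' + I.p i j' ≤ S i j) ∧
  (∀ j ∈ E, ∀ i i' : Fin m, i'.val = i.val + 1 →
      S i j + I.p i j ≤ S i' j) ∧
  (∀ j ∈ E, ∀ i : Fin m, i.val = m - 1 →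
      S i j + I.p i j = I.d j)

/-- A job set is feasible if it admits a JIT schedule. -/
def Feasible {m : ℕ} {J : Type} (I : JITInstance m J) (E : Finset J) : Prop :=
  ∃ S : Fin m → J → ℕ, IsJITSchedule I E S

/-- Completion times on a single machine when the jobs are scheduled as soon as
possible in the order given by the list `L`, where `prev j` is the completion
time of job `j` on the previous machine: each job completes at
`max (completion of its predecessor on this machine) (prev j) + (its processing time)`. -/
def machineCompl {J : Type} [DecidableEq J] (pt : J → ℕ) (prev : J → ℕ)
    (L : List J) : J → ℕ :=
  (L.foldl (fun acc j =>
      let c := max acc.1 (prev j) + pt j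
      (c, Function.update acc.2 j c)) ((0 : ℕ), fun _ => (0 : ℕ))).2

/-- Completion times on machines `0, …, i` when jobs are scheduled as soon as
possible, machine `i` processing the jobs in the order `L i`. -/
def asapCompl {J : Type} [DecidableEq J] (pt : ℕ → J → ℕ) (L : ℕ → List J) :
    ℕ → J → ℕ
  | 0 => machineCompl (pt 0) (fun _ => 0) (L 0)
  | (i + 1) => machineCompl (pt (i + 1)) (asapCompl pt L i) (L (i + 1))

namespace JITAux

variable {J : Type} [DecidableEq J]

def step (pt prev : J → ℕ) : ℕ × (J → ℕ) → J → ℕ × (J → ℕ) :=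
  fun acc j =>
    let c := max acc.1 (prev j) + pt j
    (c, Function.update acc.2 j c)

theorem step_def (pt prev : J → ℕ) (acc : ℕ × (J → ℕ)) (j : J) :
    step pt prev acc j = (max acc.1 (prev j) + pt j,
      Function.update acc.2 j (max acc.1 (prev j) + pt j)) := rfl

theorem machineCompl_eq (pt prev : J → ℕ) (L : List J) :
    machineCompl pt prev L = (L.foldl (step pt prev) ((0:ℕ), fun _ => 0)).2 := rfl

theorem foldl_fst_le (pt prev : J → ℕ) :
    ∀ (L : List J) (a : ℕ) (f : J → ℕ), a ≤ (L.foldl (step pt prev) (a, f)).1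
  | [], a, f => le_refl a
  | h :: T, a, f => by
      simp only [List.foldl_cons, step_def]
      exact le_trans (le_trans (le_max_left _ _) (Nat.le_add_right _ _))
        (foldl_fst_le pt prev T _ _)

theorem foldl_snd_not_mem (pt prev : J → ℕ) (j : J) :
    ∀ (L : List J), j ∉ L → ∀ (a : ℕ) (f : J → ℕ),
      (L.foldl (step pt prev) (a, f)).2 j = f j
  | [], _, a, f => rfl
  | h :: T, hj, a, f => by
      simp only [List.mem_cons, not_or] at hj
      simp only [List.foldl_cons, step_def]
      rw [foldl_snd_not_mem pt prev j T hj.2, Function.update_of_ne hj.1]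

theorem foldl_snd_ge (pt prev : J → ℕ) (j : J) :
    ∀ (L : List J), j ∈ L → ∀ (a : ℕ) (f : J → ℕ),
      max a (prev j) + pt j ≤ (L.foldl (step pt prev) (a, f)).2 j
  | [], hj, _, _ => absurd hj List.not_mem_nil
  | h :: T, hj, a, f => by
      simp only [List.foldl_cons, step_def]
      by_cases hT : j ∈ T
      · refine le_trans ?_ (foldl_snd_ge pt prev j T hT _ _)
        have : a ≤ max a (prev h) + pt h :=
          le_trans (le_max_left _ _) (Nat.le_add_right _ _)
        gcongr
      · have hjh : j = h := by
          rcases List.mem_cons.1 hj with h1 | h1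
          · exact h1
          · exact absurd h1 hT
        subst hjh
        rw [foldl_snd_not_mem pt prev j T hT, Function.update_self]

theorem foldl_disjoint (pt prev : J → ℕ) (j j' : J) (hne : j ≠ j') :
    ∀ (L : List J), L.Nodup → j ∈ L → j' ∈ L → ∀ (a : ℕ) (f : J → ℕ),
      (L.foldl (step pt prev) (a, f)).2 j + pt j' ≤ (L.foldl (step pt prev) (a, f)).2 j'
      ∨ (L.foldl (step pt prev) (a, f)).2 j' + pt j ≤ (L.foldl (step pt prev) (a, f)).2 j
  | [], _, hj, _, _, _ => absurd hj List.not_mem_nil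
  | h :: T, hN, hj, hj', a, f => by
      have hN' := List.nodup_cons.1 hN
      simp only [List.foldl_cons, step_def]
      by_cases hjh : j = h
      · subst hjh
        have hj'T : j' ∈ T := by
          rcases List.mem_cons.1 hj' with h1 | h1
          · exact absurd h1.symm hne
          · exact h1
        left
        rw [foldl_snd_not_mem pt prev j T hN'.1, Function.update_self]
        refine le_trans ?_ (foldl_snd_ge pt prev j' T hj'T _ _)
        gcongr
        exact le_max_left _ _
      · by_cases hj'h : j' = h
        · subst hj'h
          have hjT : j ∈ T := by
            rcases List.mem_cons.1 hj with h1 | h1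
            · exact absurd h1 hjh
            · exact h1
          right
          rw [foldl_snd_not_mem pt prev j' T hN'.1, Function.update_self]
          refine le_trans ?_ (foldl_snd_ge pt prev j T hjT _ _)
          gcongr
          exact le_max_left _ _
        · have hjT : j ∈ T := by
            rcases List.mem_cons.1 hj with h1 | h1
            · exact absurd h1 hjh
            · exact h1
          have hj'T : j' ∈ T := by
            rcases List.mem_cons.1 hj' with h1 | h1
            · exact absurd h1 hj'h
            · exact h1
          exact foldl_disjoint pt prev j j' hne T hN'.2 hjT hj'T _ _

theorem foldl_simulate (pt prev Sold : J → ℕ) (j : J) :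
    ∀ (L : List J), L.Nodup → (∀ x ∈ L, prev x ≤ Sold x) →
      L.Pairwise (fun x y => Sold x + pt x ≤ Sold y) →
      j ∈ L → ∀ (a : ℕ) (f : J → ℕ), (∀ x ∈ L, a ≤ Sold x) →
      (L.foldl (step pt prev) (a, f)).2 j ≤ Sold j + pt j
  | [], _, _, _, hj, _, _, _ => absurd hj List.not_mem_nil
  | h :: T, hN, hprev, hpair, hj, a, f, ha => by
      have hN' := List.nodup_cons.1 hN
      have hpair' := List.pairwise_cons.1 hpair
      simp only [List.foldl_cons, step_def]
      have hch : max a (prev h) + pt h ≤ Sold h + pt h := by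
        have h1 := ha h List.mem_cons_self
        have h2 := hprev h List.mem_cons_self
        gcongr
        exact max_le h1 h2
      by_cases hjh : j = h
      · subst hjh
        rw [foldl_snd_not_mem pt prev j T hN'.1, Function.update_self]
        exact hch
      · have hjT : j ∈ T := by
          rcases List.mem_cons.1 hj with h1 | h1
          · exact absurd h1 hjh
          · exact h1
        refine foldl_simulate pt prev Sold j T hN'.2
          (fun x hx => hprev x (List.mem_cons_of_mem h hx)) hpair'.2 hjT _ _ ?_
        intro x hx
        exact le_trans hch (hpair'.1 x hx)

theorem foldl_sum (pt : J → ℕ) (j : J) :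
    ∀ (L₁ L₂ : List J), j ∉ L₁ → j ∉ L₂ → ∀ (a : ℕ) (f : J → ℕ),
      ((L₁ ++ j :: L₂).foldl (step pt (fun _ => 0)) (a, f)).2 j
        = a + (L₁.map pt).sum + pt j
  | [], L₂, _, h2, a, f => by
      simp only [List.nil_append, List.foldl_cons, step_def]
      rw [foldl_snd_not_mem pt (fun _ => 0) j L₂ h2, Function.update_self]
      simp
  | h :: L₁, L₂, h1, h2, a, f => by
      simp only [List.mem_cons, not_or] at h1
      simp only [List.cons_append, List.foldl_cons, step_def]
      rw [foldl_sum pt j L₁ L₂ h1.2 h2]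
      simp only [List.map_cons, List.sum_cons]
      omega

theorem machineCompl_ge (pt prev : J → ℕ) {L : List J} {j : J} (hj : j ∈ L) :
    prev j + pt j ≤ machineCompl pt prev L j := by
  have := foldl_snd_ge pt prev j L hj 0 (fun _ => 0)
  rw [machineCompl_eq]
  rw [max_eq_right (Nat.zero_le _)] at this
  exact this

theorem machineCompl_disj (pt prev : J → ℕ) {L : List J} (hN : L.Nodup)
    {j j' : J} (hj : j ∈ L) (hj' : j' ∈ L) (hne : j ≠ j') :
    machineCompl pt prev L j + pt j' ≤ machineCompl pt prev L j'
    ∨ machineCompl pt prev L j' + pt j ≤ machineCompl pt prev L j := by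
  rw [machineCompl_eq]
  exact foldl_disjoint pt prev j j' hne L hN hj hj' 0 (fun _ => 0)

theorem machineCompl_sim (pt prev Sold : J → ℕ) {L : List J} (hN : L.Nodup)
    (hprev : ∀ x ∈ L, prev x ≤ Sold x)
    (hpair : L.Pairwise (fun x y => Sold x + pt x ≤ Sold y))
    {j : J} (hj : j ∈ L) :
    machineCompl pt prev L j ≤ Sold j + pt j := by
  rw [machineCompl_eq]
  exact foldl_simulate pt prev Sold j L hN hprev hpair hj 0 (fun _ => 0)
    (fun x _ => Nat.zero_le _)

theorem machineCompl_sum (pt : J → ℕ) {L₁ L₂ : List J} {j : J}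
    (h1 : j ∉ L₁) (h2 : j ∉ L₂) :
    machineCompl pt (fun _ => 0) (L₁ ++ j :: L₂) j = (L₁.map pt).sum + pt j := by
  rw [machineCompl_eq]
  rw [foldl_sum pt j L₁ L₂ h1 h2]
  omega

theorem capacity (Sold pt : J → ℕ) (F : Finset J) :
    (∀ x ∈ F, 0 < pt x) →
    (∀ x ∈ F, ∀ y ∈ F, x ≠ y → Sold x + pt x ≤ Sold y ∨ Sold y + pt y ≤ Sold x) →
    ∀ B : ℕ, (∀ x ∈ F, Sold x + pt x ≤ B) → ∑ x ∈ F, pt x ≤ B := by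
  induction F using Finset.strongInduction with
  | _ F ih =>
    intro hpos hdis B hB
    rcases F.eq_empty_or_nonempty with rfl | hne
    · simp
    obtain ⟨a, haF, hmax⟩ := Finset.exists_max_image F Sold hne
    have herase : ∀ x ∈ F.erase a, Sold x + pt x ≤ Sold a := by
      intro x hx
      have hxF := Finset.mem_of_mem_erase hx
      have hxa := Finset.ne_of_mem_erase hx
      rcases hdis x hxF a haF hxa with h | h
      · exact h
      · have h1 := hmax x hxF
        have h2 := hpos a haF
        omega
    have hsum := ih (F.erase a) (Finset.erase_ssubset haF)
      (fun x hx => hpos x (Finset.mem_of_mem_erase hx))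
      (fun x hx y hy => hdis x (Finset.mem_of_mem_erase hx) y (Finset.mem_of_mem_erase hy))
      (Sold a) herase
    have heq : ∑ x ∈ F.erase a, pt x + pt a = ∑ x ∈ F, pt x :=
      Finset.sum_erase_add _ _ haF
    have hBa := hB a haF
    omega

theorem asapCompl_as_machine (pt : ℕ → J → ℕ) (L : ℕ → List J) (i : ℕ) :
    ∃ prev, asapCompl pt L i = machineCompl (pt i) prev (L i) := by
  cases i with
  | zero => exact ⟨fun _ => 0, rfl⟩
  | succ n => exact ⟨asapCompl pt L n, rfl⟩

end JITAux

/-- `m`-machine feasibility characterization (`m ≥ 3`).  A set of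
jobs `e 0, …, e (k'-1)` with strictly increasing due dates is feasible iff
(a) `d_{j-1} + pᵐ_j ≤ d_j` for every `j` (with `d_{-1} = 0`), and
(b) there are processing orders `σ 0, …, σ (m-2)` of the jobs with
`σ 0 = σ 1` such that, scheduling the jobs as soon as possible on machines
`M₁, …, M_{m-1}` in these orders, the completion time of each job `j` on
machine `M_{m-1}` is at most `d_j - pᵐ_j`. -/
theorem jit_m_machines_feasibility_iff {m : ℕ} (hm : 3 ≤ m) {J : Type}
    [DecidableEq J] {k' : ℕ} (I : JITInstance m J) (e : Fin k' ↪ J)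
    (hmono : StrictMono fun l => I.d (e l)) :
    Feasible I (Finset.univ.map e) ↔
      ((∀ j : Fin k',
          (if j.val = 0 then 0
           else I.d (e ⟨j.val - 1, lt_of_le_of_lt (Nat.sub_le _ _) j.isLt⟩))
            + I.p ⟨m - 1, by omega⟩ (e j) ≤ I.d (e j)) ∧
       ∃ σ : Fin (m - 1) → Equiv.Perm (Fin k'),
         σ ⟨0, by omega⟩ = σ ⟨1, by omega⟩ ∧
         ∀ j : Fin k',
           asapCompl
             (fun i a => if h : i < m then I.p ⟨i, h⟩ a else 0)
             (fun i => if h : i < m - 1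
               then List.ofFn (fun t => e ((σ ⟨i, h⟩) t)) else [])
             (m - 2) (e j)
             + I.p ⟨m - 1, by omega⟩ (e j) ≤ I.d (e j)) := by
  have hlm : m - 1 < m := by omega
  have hmemE : ∀ l : Fin k', e l ∈ Finset.univ.map e :=
    fun l => Finset.mem_map.2 ⟨l, Finset.mem_univ l, rfl⟩
  have hEmem : ∀ j ∈ Finset.univ.map e, ∃ l, e l = j := by
    intro j hj
    rcases Finset.mem_map.1 hj with ⟨l, _, h⟩
    exact ⟨l, h⟩
  constructor
  · rintro ⟨S, hdis, hprec, hdue⟩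
    have hdue' : ∀ l : Fin k',
        S ⟨m - 1, hlm⟩ (e l) + I.p ⟨m - 1, hlm⟩ (e l) = I.d (e l) :=
      fun l => hdue (e l) (hmemE l) ⟨m - 1, hlm⟩ rfl
    have keyA : ∀ l : Fin k',
        (if l.val = 0 then 0
         else I.d (e ⟨l.val - 1, lt_of_le_of_lt (Nat.sub_le _ _) l.isLt⟩))
          + I.p ⟨m - 1, hlm⟩ (e l) ≤ I.d (e l) := by
      intro l
      by_cases h0 : l.val = 0
      · rw [if_pos h0]
        have hd := hdue' l
        omega
      · rw [if_neg h0]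
        have hl0lt : l.val - 1 < k' := lt_of_le_of_lt (Nat.sub_le _ _) l.isLt
        have hl0l : (⟨l.val - 1, hl0lt⟩ : Fin k') < l := by
          show l.val - 1 < l.val
          omega
        have hne : e ⟨l.val - 1, hl0lt⟩ ≠ e l :=
          fun h => absurd (e.injective h) (ne_of_lt hl0l)
        have hd0 := hdue' ⟨l.val - 1, hl0lt⟩
        have hd := hdue' l
        have hmlt : I.d (e ⟨l.val - 1, hl0lt⟩) < I.d (e l) := hmono hl0l
        have hdisj := hdis ⟨m - 1, hlm⟩ (e ⟨l.val - 1, hl0lt⟩)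
          (hmemE _) (e l) (hmemE _) hne
        have hp0 := I.p_pos ⟨m - 1, hlm⟩ (e ⟨l.val - 1, hl0lt⟩)
        omega
    set mach : ℕ → Fin m :=
      fun i => ⟨min i (m - 1), Nat.lt_of_le_of_lt (Nat.min_le_right _ _) hlm⟩
      with hmachd
    set σf : Fin (m - 1) → Equiv.Perm (Fin k') :=
      fun i => Tuple.sort (fun l => S (mach (max i.val 1)) (e l)) with hσfd
    set pt' : ℕ → J → ℕ := fun i a => if h : i < m then I.p ⟨i, h⟩ a else 0 with hptd
    set L' : ℕ → List J := fun i => if h : i < m - 1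
        then List.ofFn (fun t => e ((σf ⟨i, h⟩) t)) else [] with hLd
    set C : ℕ → J → ℕ := asapCompl pt' L' with hCd
    have hL_eq : ∀ (i : ℕ) (hi : i < m - 1),
        L' i = List.ofFn (fun t => e ((σf ⟨i, hi⟩) t)) := by
      intro i hi
      simp only [hLd]
      rw [dif_pos hi]
    have hnd : ∀ (i : ℕ) (hi : i < m - 1), (L' i).Nodup := by
      intro i hi
      rw [hL_eq i hi]
      exact List.nodup_ofFn.2 (e.injective.comp (σf ⟨i, hi⟩).injective)
    have hmemL : ∀ (i : ℕ) (hi : i < m - 1) (l : Fin k'), e l ∈ L' i := by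
      intro i hi l
      rw [hL_eq i hi, List.mem_ofFn]
      exact ⟨(σf ⟨i, hi⟩)⁻¹ l, by simp⟩
    have hpt_mach : ∀ (i : ℕ), i < m → pt' i = I.p (mach i) := by
      intro i hi
      funext x
      simp only [hptd]
      rw [dif_pos hi]
      congr 1
      exact Fin.ext (by simp [hmachd]; omega)
    have hmachval : ∀ i : ℕ, (mach i).val = min i (m - 1) := by
      intro i
      rw [hmachd]
    have hσf_eq : ∀ (i : ℕ) (h1 : 1 ≤ i) (h2 : i < m - 1),
        σf ⟨i, h2⟩ = Tuple.sort (fun l => S (mach i) (e l)) := by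
      intro i h1 h2
      simp only [hσfd]
      rw [show max (Fin.val (⟨i, h2⟩ : Fin (m - 1))) 1 = i from by simp; omega]
    have hpairS : ∀ (i : ℕ) (h1 : 1 ≤ i) (h2 : i < m - 1),
        (List.ofFn (fun t => e ((σf ⟨i, h2⟩) t))).Pairwise
          (fun x y => S (mach i) x + I.p (mach i) x ≤ S (mach i) y) := by
      intro i h1 h2
      rw [List.pairwise_ofFn]
      intro t t' htt
      rw [hσf_eq i h1 h2]
      have hle : S (mach i) (e (Tuple.sort (fun l => S (mach i) (e l)) t))
          ≤ S (mach i) (e (Tuple.sort (fun l => S (mach i) (e l)) t')) :=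
        Tuple.monotone_sort (fun l => S (mach i) (e l)) (le_of_lt htt)
      have hne : e ((Tuple.sort (fun l => S (mach i) (e l))) t)
          ≠ e ((Tuple.sort (fun l => S (mach i) (e l))) t') := fun h =>
        absurd ((Tuple.sort (fun l => S (mach i) (e l))).injective (e.injective h))
          (ne_of_lt htt)
      have hd := hdis (mach i) _ (hmemE _) _ (hmemE _) hne
      have hp := I.p_pos (mach i)
        (e ((Tuple.sort (fun l => S (mach i) (e l))) t'))
      omega
    have claim0 : ∀ l : Fin k', C 0 (e l) ≤ S (mach 1) (e l) := by
      intro l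
      have h0m : (0 : ℕ) < m - 1 := by omega
      have hC0 : C 0 = machineCompl (pt' 0) (fun _ => 0) (L' 0) := by
        rw [hCd]
        rfl
      have hL0 : L' 0 = List.ofFn (fun t => e ((σf ⟨0, h0m⟩) t)) := hL_eq 0 h0m
      have hmem0 : e l ∈ L' 0 := hmemL 0 h0m l
      obtain ⟨L₁, L₂, hsplit⟩ := List.append_of_mem hmem0
      have hnd0 : (L' 0).Nodup := hnd 0 h0m
      rw [hsplit] at hnd0
      rw [List.nodup_append] at hnd0
      have hn1 : e l ∉ L₁ := fun h => hnd0.2.2 _ h _ List.mem_cons_self rfl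
      have hn2 : e l ∉ L₂ := (List.nodup_cons.1 hnd0.2.1).1
      have hsum : C 0 (e l) = (L₁.map (pt' 0)).sum + pt' 0 (e l) := by
        rw [hC0, hsplit]
        exact JITAux.machineCompl_sum (pt' 0) hn1 hn2
      have hptm0 : pt' 0 = I.p (mach 0) := hpt_mach 0 (by omega)
      have hpair : (L' 0).Pairwise (fun x y => S (mach 1) x ≤ S (mach 1) y) := by
        rw [hL0, List.pairwise_ofFn]
        intro t t' htt
        have hσ0 : σf ⟨0, h0m⟩ = Tuple.sort (fun l => S (mach 1) (e l)) := by
          simp only [hσfd]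
          rw [show max (Fin.val (⟨0, h0m⟩ : Fin (m - 1))) 1 = 1 from by simp]
        rw [hσ0]
        exact Tuple.monotone_sort (fun l => S (mach 1) (e l)) (le_of_lt htt)
      have hLsub : ∀ x ∈ L' 0, ∃ t, e t = x := by
        intro x hx
        rw [hL0, List.mem_ofFn] at hx
        obtain ⟨t, ht⟩ := hx
        exact ⟨_, ht⟩
      have hconsSub : ∀ x ∈ (e l :: L₁), x ∈ L' 0 := by
        intro x hx
        rw [hsplit]
        rcases List.mem_cons.1 hx with rfl | hxx
        · exact List.mem_append_right _ List.mem_cons_self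
        · exact List.mem_append_left _ hxx
      have hbound : ∀ x ∈ (e l :: L₁),
          S (mach 0) x + I.p (mach 0) x ≤ S (mach 1) (e l) := by
        intro x hx
        have hxL := hconsSub x hx
        obtain ⟨t, rfl⟩ := hLsub x hxL
        have hpr : S (mach 0) (e t) + I.p (mach 0) (e t) ≤ S (mach 1) (e t) :=
          hprec (e t) (hmemE t) (mach 0) (mach 1) (by simp [hmachd]; omega)
        have hS1 : S (mach 1) (e t) ≤ S (mach 1) (e l) := by
          rcases List.mem_cons.1 hx with heq | hxx
          · exact le_of_eq (by rw [heq])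
          · have hp := hpair
            rw [hsplit, List.pairwise_append] at hp
            exact hp.2.2 _ hxx _ List.mem_cons_self
        omega
      have hndc : (e l :: L₁).Nodup := List.nodup_cons.2 ⟨hn1, hnd0.1⟩
      have hE' : ∀ x ∈ (e l :: L₁).toFinset, x ∈ Finset.univ.map e := by
        intro x hx
        obtain ⟨t, rfl⟩ := hLsub x (hconsSub x (List.mem_toFinset.1 hx))
        exact hmemE t
      have hcap := JITAux.capacity (S (mach 0)) (I.p (mach 0)) (e l :: L₁).toFinset
        (fun x _ => I.p_pos _ x)
        (fun x hx y hy hxy => hdis (mach 0) x (hE' x hx) y (hE' y hy) hxy)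
        (S (mach 1) (e l))
        (fun x hx => hbound x (List.mem_toFinset.1 hx))
      have hsumF : ∑ x ∈ (e l :: L₁).toFinset, I.p (mach 0) x
          = ((e l :: L₁).map (I.p (mach 0))).sum := List.sum_toFinset _ hndc
      rw [hsum, hptm0]
      simp only [List.map_cons, List.sum_cons] at hsumF
      omega
    have main : ∀ i : ℕ, 1 ≤ i → i ≤ m - 2 → ∀ l : Fin k',
        C i (e l) ≤ S (mach i) (e l) + I.p (mach i) (e l) := by
      intro i
      induction i with
      | zero => omega
      | succ n ih =>
        intro h1 h2 l
        have hn1 : n + 1 < m - 1 := by omega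
        have hCn : C (n + 1) = machineCompl (pt' (n + 1)) (C n) (L' (n + 1)) := by
          rw [hCd]
          rfl
        have hLn : L' (n + 1) = List.ofFn (fun t => e ((σf ⟨n + 1, hn1⟩) t)) :=
          hL_eq _ hn1
        have hptm : pt' (n + 1) = I.p (mach (n + 1)) := hpt_mach _ (by omega)
        have hprev : ∀ x ∈ L' (n + 1), C n x ≤ S (mach (n + 1)) x := by
          intro x hx
          rw [hLn, List.mem_ofFn] at hx
          obtain ⟨t, rfl⟩ := hx
          beta_reduce
          rcases Nat.eq_zero_or_pos n with rfl | hn0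
          · exact claim0 _
          · have hih := ih (by omega) (by omega) ((σf ⟨n + 1, hn1⟩) t)
            have hpr : S (mach n) (e ((σf ⟨n + 1, hn1⟩) t))
                  + I.p (mach n) (e ((σf ⟨n + 1, hn1⟩) t))
                ≤ S (mach (n + 1)) (e ((σf ⟨n + 1, hn1⟩) t)) :=
              hprec _ (hmemE _) (mach n) (mach (n + 1)) (by simp [hmachd]; omega)
            omega
        have hpair := hpairS (n + 1) (by omega) hn1
        rw [← hLn] at hpair
        rw [hCn, hptm]
        exact JITAux.machineCompl_sim _ (C n) (S (mach (n + 1))) (hnd _ hn1)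
          hprev hpair (hmemL _ hn1 l)
    have final : ∀ j : Fin k',
        C (m - 2) (e j) + I.p ⟨m - 1, hlm⟩ (e j) ≤ I.d (e j) := by
      intro j
      have h1 := main (m - 2) (by omega) (le_refl _) j
      have h2 : S (mach (m - 2)) (e j) + I.p (mach (m - 2)) (e j)
          ≤ S (mach (m - 1)) (e j) :=
        hprec (e j) (hmemE j) _ _ (by simp [hmachd]; omega)
      have h3 : mach (m - 1) = (⟨m - 1, hlm⟩ : Fin m) :=
        Fin.ext (by simp [hmachd])
      rw [h3] at h2
      have h4 := hdue' j
      omega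
    exact ⟨keyA, σf, rfl, fun j => final j⟩
  · rintro ⟨ha, σ, hσ01, hb⟩
    set lastM : Fin m := ⟨m - 1, hlm⟩ with hlastd
    set pt' : ℕ → J → ℕ := fun i a => if h : i < m then I.p ⟨i, h⟩ a else 0 with hptd
    set L' : ℕ → List J := fun i => if h : i < m - 1
        then List.ofFn (fun t => e ((σ ⟨i, h⟩) t)) else [] with hLd
    set C : ℕ → J → ℕ := asapCompl pt' L' with hCd
    have ha' : ∀ l : Fin k',
        (if l.val = 0 then 0
         else I.d (e ⟨l.val - 1, lt_of_le_of_lt (Nat.sub_le _ _) l.isLt⟩))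
          + I.p lastM (e l) ≤ I.d (e l) := fun l => ha l
    have hb' : ∀ l : Fin k', C (m - 2) (e l) + I.p lastM (e l) ≤ I.d (e l) :=
      fun l => hb l
    have hpt_eq : ∀ (i : Fin m) (x : J), pt' i.val x = I.p i x := by
      intro i x
      simp only [hptd]
      rw [dif_pos i.isLt]
    have hL_eq : ∀ (i : ℕ) (hi : i < m - 1),
        L' i = List.ofFn (fun t => e ((σ ⟨i, hi⟩) t)) := by
      intro i hi
      simp only [hLd]
      rw [dif_pos hi]
    have hnd : ∀ (i : ℕ) (hi : i < m - 1), (L' i).Nodup := by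
      intro i hi
      rw [hL_eq i hi]
      exact List.nodup_ofFn.2 (e.injective.comp (σ ⟨i, hi⟩).injective)
    have hmemL : ∀ (i : ℕ) (hi : i < m - 1) (l : Fin k'), e l ∈ L' i := by
      intro i hi l
      rw [hL_eq i hi, List.mem_ofFn]
      exact ⟨(σ ⟨i, hi⟩)⁻¹ l, by simp⟩
    have B1 : ∀ (i : ℕ) (hi : i < m - 1) (l : Fin k'), pt' i (e l) ≤ C i (e l) := by
      intro i hi l
      obtain ⟨prev, hpe⟩ := JITAux.asapCompl_as_machine pt' L' i
      have h := JITAux.machineCompl_ge (pt' i) prev (hmemL i hi l)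
      rw [hCd, hpe]
      omega
    have B2 : ∀ (i : ℕ) (hi : i < m - 1) (l l' : Fin k'), e l ≠ e l' →
        C i (e l) + pt' i (e l') ≤ C i (e l') ∨
        C i (e l') + pt' i (e l) ≤ C i (e l) := by
      intro i hi l l' hne
      obtain ⟨prev, hpe⟩ := JITAux.asapCompl_as_machine pt' L' i
      rw [hCd, hpe]
      exact JITAux.machineCompl_disj (pt' i) prev (hnd i hi)
        (hmemL i hi l) (hmemL i hi l') hne
    have B3 : ∀ (i : ℕ) (hi : i + 1 < m - 1) (l : Fin k'),
        C i (e l) + pt' (i + 1) (e l) ≤ C (i + 1) (e l) := by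
      intro i hi l
      have hrec : C (i + 1) = machineCompl (pt' (i + 1)) (C i) (L' (i + 1)) := by
        rw [hCd]
        rfl
      rw [hrec]
      exact JITAux.machineCompl_ge (pt' (i + 1)) (C i) (hmemL (i + 1) hi l)
    have hpd : ∀ t : Fin k', I.p lastM (e t) ≤ I.d (e t) := by
      intro t
      have h := ha' t
      by_cases h0 : t.val = 0
      · rw [if_pos h0] at h
        omega
      · rw [if_neg h0] at h
        omega
    have hchain : ∀ t t' : Fin k', t < t' →
        I.d (e t) + I.p lastM (e t') ≤ I.d (e t') := by
      intro t t' htt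
      have hv : t.val < t'.val := htt
      have h := ha' t'
      rw [if_neg (by omega)] at h
      have hle : t ≤ (⟨t'.val - 1, lt_of_le_of_lt (Nat.sub_le _ _) t'.isLt⟩ : Fin k') :=
        Fin.le_def.mpr (by simp; omega)
      have hmle := hmono.monotone hle
      omega
    refine ⟨fun i x => if i.val < m - 1 then C i.val x - I.p i x
        else I.d x - I.p lastM x, ?_, ?_, ?_⟩
    · intro i j hj j' hj' hne
      obtain ⟨l, rfl⟩ := hEmem j hj
      obtain ⟨l', rfl⟩ := hEmem j' hj'
      beta_reduce
      by_cases hi : i.val < m - 1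
      · simp only [if_pos hi]
        have h1 := B1 i.val hi l
        have h2 := B1 i.val hi l'
        have h3 := B2 i.val hi l l' hne
        rw [hpt_eq i] at h1 h2
        rw [hpt_eq i, hpt_eq i] at h3
        omega
      · simp only [if_neg hi]
        have hieq : i = lastM := Fin.ext (by simp [hlastd]; have := i.isLt; omega)
        rw [hieq]
        have hll : l ≠ l' := fun h => hne (by rw [h])
        rcases lt_trichotomy l l' with hlt | heq | hgt
        · have hc := hchain l l' hlt
          have hp := hpd l
          omega
        · exact absurd heq hll
        · have hc := hchain l' l hgt
          have hp := hpd l'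
          omega
    · intro j hj i i' hii'
      obtain ⟨l, rfl⟩ := hEmem j hj
      beta_reduce
      by_cases hi' : i'.val < m - 1
      · have hi : i.val < m - 1 := by omega
        simp only [if_pos hi, if_pos hi']
        have h1 := B1 i.val hi l
        rw [hpt_eq i] at h1
        have h2 : C i.val (e l) + pt' i'.val (e l) ≤ C i'.val (e l) := by
          rw [hii']
          exact B3 i.val (by omega) l
        rw [hpt_eq i'] at h2
        have h3 := B1 i'.val hi' l
        rw [hpt_eq i'] at h3
        omega
      · have hi'm : i'.val = m - 1 := by have := i'.isLt; omega
        have hi : i.val < m - 1 := by omega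
        have him : i.val = m - 2 := by omega
        simp only [if_pos hi, if_neg hi']
        have h1 := B1 i.val hi l
        rw [hpt_eq i] at h1
        have h2 := hb' l
        rw [← him] at h2
        omega
    · intro j hj i hi
      obtain ⟨l, rfl⟩ := hEmem j hj
      beta_reduce
      simp only [if_neg (by omega : ¬ i.val < m - 1)]
      have hieq : i = lastM := Fin.ext (by simp [hlastd]; omega)
      rw [hieq]
      have hp := hpd l
      omega
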